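/- Assume there is an open interval I ⊆ ℝ containing 0 such that for every α ∈ I, ∫ p q^α (1 + |log p| + |log q|)² dμ < ∞ (in particular Z_α ∈ (0,∞) for α ∈ I). Then the function α ↦ H(p_α) is differentiable at α = 0 and its derivative there equals −Cov_{p}[log p, log q]. -/

import Mathlib

open MeasureTheory Real Filter Topology

private lemma phi_one_le (u v : ℝ) : (1:ℝ) ≤ 1 + |u| + |v| := by
  have := abs_nonneg u; have := abs_nonneg v; linarith

private lemma meas_rpow {X : Type*} [MeasurableSpace X] {q : X → ℝ}
    (hq : Measurable q) (hq0 : ∀ x, 0 ≤ q x) (α : ℝ) :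
    Measurable fun x => q x ^ α := by
  have h : (fun x => q x ^ α)
      = fun x => if q x = 0 then (0:ℝ) ^ α else Real.exp (Real.log (q x) * α) := by
    funext x
    by_cases h0 : q x = 0
    · simp [h0]
    · rw [if_neg h0, ← Real.rpow_def_of_pos ((hq0 x).lt_of_ne (Ne.symm h0))]
  rw [h]
  exact Measurable.ite (hq (measurableSet_singleton 0)) measurable_const
    ((hq.log.mul_const α).exp)

private lemma aux_int {X : Type*} [MeasurableSpace X] {μ : Measure X} {p q : X → ℝ}
    (hpmeas : Measurable p) (hp0 : ∀ x, 0 ≤ p x)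
    (hqmeas : Measurable q) (hq0 : ∀ x, 0 ≤ q x) {α : ℝ}
    (hφ : Integrable (fun x => p x * q x ^ α * (1 + |Real.log (p x)| + |Real.log (q x)|) ^ 2) μ)
    {g : X → ℝ} (hg : Measurable g)
    (hgφ : ∀ x, |g x| ≤ 1 + |Real.log (p x)| + |Real.log (q x)|) :
    Integrable (fun x => p x * q x ^ α * g x) μ := by
  refine hφ.mono' ((hpmeas.mul (meas_rpow hqmeas hq0 α)).mul hg).aestronglyMeasurable ?_
  refine Eventually.of_forall fun x => ?_
  have h1 : 0 ≤ p x * q x ^ α := mul_nonneg (hp0 x) (Real.rpow_nonneg (hq0 x) α)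
  have h2 : |g x| ≤ (1 + |Real.log (p x)| + |Real.log (q x)|) ^ 2 := by
    nlinarith [hgφ x, phi_one_le (Real.log (p x)) (Real.log (q x))]
  calc ‖p x * q x ^ α * g x‖ = p x * q x ^ α * |g x| := by
        rw [Real.norm_eq_abs, abs_mul, abs_of_nonneg h1]
    _ ≤ p x * q x ^ α * (1 + |Real.log (p x)| + |Real.log (q x)|) ^ 2 :=
        mul_le_mul_of_nonneg_left h2 h1

private lemma aux_deriv {X : Type*} [MeasurableSpace X] {μ : Measure X} {p q : X → ℝ}
    (hpmeas : Measurable p) (hp0 : ∀ x, 0 ≤ p x)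
    (hqmeas : Measurable q) (hq0 : ∀ x, 0 ≤ q x)
    (habs : ∀ᵐ x ∂μ, q x = 0 → p x = 0)
    {a b : ℝ} (ha : a < 0) (hb : 0 < b)
    (hφa : Integrable (fun x => p x * q x ^ a * (1 + |Real.log (p x)| + |Real.log (q x)|) ^ 2) μ)
    (hφb : Integrable (fun x => p x * q x ^ b * (1 + |Real.log (p x)| + |Real.log (q x)|) ^ 2) μ)
    (hφ0 : Integrable
      (fun x => p x * q x ^ (0:ℝ) * (1 + |Real.log (p x)| + |Real.log (q x)|) ^ 2) μ)
    {g : X → ℝ} (hg : Measurable g)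
    (hgφ : ∀ x, |g x| ≤ 1 + |Real.log (p x)| + |Real.log (q x)|) :
    HasDerivAt (fun α : ℝ => ∫ x, p x * q x ^ α * g x ∂μ)
      (∫ x, p x * (Real.log (q x) * g x) ∂μ) 0 := by
  set φ : X → ℝ := fun x => 1 + |Real.log (p x)| + |Real.log (q x)| with hφdef
  have hεpos : 0 < min (-a) b := lt_min (neg_pos.2 ha) hb
  have key := hasDerivAt_integral_of_dominated_loc_of_deriv_le (μ := μ) (x₀ := (0:ℝ))
    (F := fun (α : ℝ) x => p x * q x ^ α * g x)
    (F' := fun (α : ℝ) x => p x * q x ^ α * (Real.log (q x) * g x))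
    (bound := fun x => p x * q x ^ a * φ x ^ 2 + p x * q x ^ b * φ x ^ 2)
    (Metric.ball_mem_nhds _ hεpos)
    (Eventually.of_forall fun α =>
      ((hpmeas.mul (meas_rpow hqmeas hq0 α)).mul hg).aestronglyMeasurable)
    (aux_int hpmeas hp0 hqmeas hq0 hφ0 hg hgφ)
    (((hpmeas.mul (meas_rpow hqmeas hq0 0)).mul
      ((hqmeas.log).mul hg)).aestronglyMeasurable)
    ?_ (hφa.add hφb) ?_
  · have h0 : (fun x => p x * q x ^ (0:ℝ) * (Real.log (q x) * g x))
        = fun x => p x * (Real.log (q x) * g x) := by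
      funext x; rw [Real.rpow_zero, mul_one]
    rw [h0] at key
    exact key.2
  · -- bound
    filter_upwards [habs] with x hx α hα
    rw [Metric.mem_ball, Real.dist_eq, sub_zero] at hα
    have hαa : a ≤ α := by
      have h1 : |α| < -a := hα.trans_le (min_le_left _ _)
      have := (abs_lt.1 h1).1
      linarith
    have hαb : α ≤ b := by
      have h1 : |α| < b := hα.trans_le (min_le_right _ _)
      exact ((abs_lt.1 h1).2).le
    rcases eq_or_lt_of_le (hq0 x) with hq | hq
    · have hp : p x = 0 := hx hq.symm
      simp only [hp, zero_mul, norm_zero]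
      positivity
    · have hqα : q x ^ α ≤ q x ^ a + q x ^ b := by
        rcases le_total (q x) 1 with h1 | h1
        · exact le_add_of_le_of_nonneg (Real.rpow_le_rpow_of_exponent_ge hq h1 hαa)
            (Real.rpow_nonneg (hq0 x) b)
        · exact le_add_of_nonneg_of_le (Real.rpow_nonneg (hq0 x) a)
            (Real.rpow_le_rpow_of_exponent_le h1 hαb)
      have h1 : 0 ≤ p x * q x ^ α := mul_nonneg (hp0 x) (Real.rpow_nonneg (hq0 x) α)
      have hlq : |Real.log (q x)| ≤ φ x := by
        have := abs_nonneg (Real.log (p x)); simp only [hφdef]; linarith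
      have h2 : |Real.log (q x) * g x| ≤ φ x ^ 2 := by
        rw [abs_mul, sq]
        exact mul_le_mul hlq (hgφ x) (abs_nonneg _)
          ((abs_nonneg _).trans hlq)
      have hφ2 : 0 ≤ φ x ^ 2 := sq_nonneg _
      calc ‖p x * q x ^ α * (Real.log (q x) * g x)‖
          = p x * q x ^ α * |Real.log (q x) * g x| := by
            rw [Real.norm_eq_abs, abs_mul, abs_of_nonneg h1]
        _ ≤ p x * q x ^ α * φ x ^ 2 := mul_le_mul_of_nonneg_left h2 h1
        _ ≤ p x * (q x ^ a + q x ^ b) * φ x ^ 2 := by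
            have := mul_le_mul_of_nonneg_left hqα (hp0 x)
            exact mul_le_mul_of_nonneg_right this hφ2
        _ = p x * q x ^ a * φ x ^ 2 + p x * q x ^ b * φ x ^ 2 := by ring
  · -- differentiability
    filter_upwards [habs] with x hx α hα
    by_cases hp : p x = 0
    · simpa [hp] using hasDerivAt_const α (0:ℝ)
    · have hq : 0 < q x := (hq0 x).lt_of_ne (fun h0 => hp (hx h0.symm))
      have h1 := ((Real.hasStrictDerivAt_const_rpow hq α).hasDerivAt.const_mul (p x)).mul_const
        (g x)
      refine h1.congr_deriv ?_
      ring

/-- The entropy of the tilted density `p_α = p q^α / Z_α` is differentiable at `α = 0`, with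
derivative `−Cov_p[log p, log q]`. -/
theorem skewed_entropy_deriv_at_zero
    {X : Type*} [MeasurableSpace X] (μ : Measure X) [SigmaFinite μ]
    (p q : X → ℝ)
    (hpmeas : Measurable p) (hp0 : ∀ x, 0 ≤ p x) (hp1 : ∫ x, p x ∂μ = 1)
    (hqmeas : Measurable q) (hq0 : ∀ x, 0 ≤ q x) (hq1 : ∫ x, q x ∂μ = 1)
    (habs : ∀ᵐ x ∂μ, q x = 0 → p x = 0)
    (Z : ℝ → ℝ) (hZ : Z = fun α => ∫ x, p x * q x ^ α ∂μ)
    (pα : ℝ → X → ℝ) (hpα : pα = fun α x => p x * q x ^ α / Z α)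
    (I : Set ℝ) (hIopen : IsOpen I) (hI0 : (0 : ℝ) ∈ I)
    (hint : ∀ α ∈ I, Integrable
      (fun x => p x * q x ^ α * (1 + |Real.log (p x)| + |Real.log (q x)|) ^ 2) μ)
    (hZpos : ∀ α ∈ I, 0 < Z α)
    (H : (X → ℝ) → ℝ)
    (hH : H = fun r => -∫ x, r x * Real.log (r x) ∂μ) :
    HasDerivAt (fun α => H (pα α))
      (-((∫ x, p x * (Real.log (p x) * Real.log (q x)) ∂μ) -
        (∫ x, p x * Real.log (p x) ∂μ) * (∫ x, p x * Real.log (q x) ∂μ))) 0 := by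
  -- basic pointwise bounds
  have hgb1 : ∀ x : X, |(1:ℝ)| ≤ 1 + |Real.log (p x)| + |Real.log (q x)| := by
    intro x; rw [abs_one]; exact phi_one_le _ _
  have hgbp : ∀ x : X, |Real.log (p x)| ≤ 1 + |Real.log (p x)| + |Real.log (q x)| := by
    intro x; have := abs_nonneg (Real.log (q x)); linarith
  have hgbq : ∀ x : X, |Real.log (q x)| ≤ 1 + |Real.log (p x)| + |Real.log (q x)| := by
    intro x; have := abs_nonneg (Real.log (p x)); linarith
  -- choose a < 0 < b inside I
  obtain ⟨ε, hεpos, hball⟩ := Metric.isOpen_iff.1 hIopen 0 hI0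
  have haI : -(ε/2) ∈ I := hball (by
    rw [Metric.mem_ball, Real.dist_eq, sub_zero, abs_neg, abs_of_pos (by linarith)]
    linarith)
  have hbI : ε/2 ∈ I := hball (by
    rw [Metric.mem_ball, Real.dist_eq, sub_zero, abs_of_pos (by linarith)]
    linarith)
  have ha : -(ε/2) < 0 := by linarith
  have hb : (0:ℝ) < ε/2 := by linarith
  -- derivatives of Z, A, B at 0
  have hZd : HasDerivAt Z (∫ x, p x * Real.log (q x) ∂μ) 0 := by
    have := aux_deriv hpmeas hp0 hqmeas hq0 habs ha hb (hint _ haI) (hint _ hbI)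
      (hint 0 hI0) measurable_const hgb1
    simpa [hZ] using this
  have hAd : HasDerivAt (fun α : ℝ => ∫ x, p x * q x ^ α * Real.log (p x) ∂μ)
      (∫ x, p x * (Real.log (q x) * Real.log (p x)) ∂μ) 0 :=
    aux_deriv hpmeas hp0 hqmeas hq0 habs ha hb (hint _ haI) (hint _ hbI)
      (hint 0 hI0) hpmeas.log hgbp
  have hBd : HasDerivAt (fun α : ℝ => ∫ x, p x * q x ^ α * Real.log (q x) ∂μ)
      (∫ x, p x * (Real.log (q x) * Real.log (q x)) ∂μ) 0 :=
    aux_deriv hpmeas hp0 hqmeas hq0 habs ha hb (hint _ haI) (hint _ hbI)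
      (hint 0 hI0) hqmeas.log hgbq
  -- value of Z at 0
  have hZ0 : Z 0 = 1 := by
    rw [hZ]; simp only [Real.rpow_zero, mul_one]; exact hp1
  have hZ0ne : Z 0 ≠ 0 := by rw [hZ0]; exact one_ne_zero
  -- the smooth surrogate G
  set A : ℝ → ℝ := fun α => ∫ x, p x * q x ^ α * Real.log (p x) ∂μ with hAdef
  set B : ℝ → ℝ := fun α => ∫ x, p x * q x ^ α * Real.log (q x) ∂μ with hBdef
  set G : ℝ → ℝ := fun α => Real.log (Z α) - (A α + α * B α) / Z α with hGdef
  have hA0 : A 0 = ∫ x, p x * Real.log (p x) ∂μ := by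
    simp only [hAdef, Real.rpow_zero, mul_one]
  have hB0 : B 0 = ∫ x, p x * Real.log (q x) ∂μ := by
    simp only [hBdef, Real.rpow_zero, mul_one]
  have hNd : HasDerivAt (fun α : ℝ => A α + α * B α)
      ((∫ x, p x * (Real.log (q x) * Real.log (p x)) ∂μ)
        + (1 * B 0 + 0 * (∫ x, p x * (Real.log (q x) * Real.log (q x)) ∂μ))) 0 :=
    hAd.add ((hasDerivAt_id 0).mul hBd)
  have hGd : HasDerivAt G
      ((∫ x, p x * Real.log (q x) ∂μ) / Z 0 -
        (((∫ x, p x * (Real.log (q x) * Real.log (p x)) ∂μ)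
          + (1 * B 0 + 0 * (∫ x, p x * (Real.log (q x) * Real.log (q x)) ∂μ))) * Z 0
          - (A 0 + 0 * B 0) * (∫ x, p x * Real.log (q x) ∂μ)) / Z 0 ^ 2) 0 :=
    (hZd.log hZ0ne).sub (hNd.div hZd hZ0ne)
  -- H ∘ pα agrees with G near 0
  have hEq : (fun α => H (pα α)) =ᶠ[𝓝 0] G := by
    filter_upwards [hIopen.mem_nhds hI0] with α hα
    have hZα : 0 < Z α := hZpos α hα
    have i1 : Integrable (fun x => p x * q x ^ α * Real.log (p x)) μ :=
      aux_int hpmeas hp0 hqmeas hq0 (hint α hα) hpmeas.log hgbp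
    have i2 : Integrable (fun x => p x * q x ^ α * Real.log (q x)) μ :=
      aux_int hpmeas hp0 hqmeas hq0 (hint α hα) hqmeas.log hgbq
    have i3 : Integrable (fun x => p x * q x ^ α) μ := by
      have := aux_int hpmeas hp0 hqmeas hq0 (hint α hα) measurable_const hgb1
      simpa using this
    have hre : (fun x => pα α x * Real.log (pα α x)) =ᵐ[μ]
        fun x => (Z α)⁻¹ * (p x * q x ^ α * Real.log (p x)
          + α * (p x * q x ^ α * Real.log (q x))
          - Real.log (Z α) * (p x * q x ^ α)) := by
      filter_upwards [habs] with x hx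
      rw [hpα]
      by_cases hp : p x = 0
      · simp [hp]
      · have hq : 0 < q x := (hq0 x).lt_of_ne (fun h0 => hp (hx h0.symm))
        have hqα : 0 < q x ^ α := Real.rpow_pos_of_pos hq α
        have hppos : 0 < p x := (hp0 x).lt_of_ne (Ne.symm hp)
        have hlog : Real.log (p x * q x ^ α / Z α)
            = Real.log (p x) + α * Real.log (q x) - Real.log (Z α) := by
          rw [Real.log_div (by positivity) hZα.ne', Real.log_mul hp hqα.ne',
            Real.log_rpow hq]
        simp only
        rw [hlog]
        field_simp
    have hint' : ∫ x, pα α x * Real.log (pα α x) ∂μ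
        = (Z α)⁻¹ * (A α + α * B α - Real.log (Z α) * Z α) := by
      rw [integral_congr_ae hre]
      rw [MeasureTheory.integral_const_mul]
      congr 1
      have iA : Integrable (fun x => p x * q x ^ α * Real.log (p x)
          + α * (p x * q x ^ α * Real.log (q x))) μ := i1.add (i2.const_mul α)
      have iW : Integrable (fun x => Real.log (Z α) * (p x * q x ^ α)) μ := i3.const_mul _
      rw [integral_sub iA iW, integral_add i1 (i2.const_mul α),
        MeasureTheory.integral_const_mul, MeasureTheory.integral_const_mul]
      rw [hZ, hAdef, hBdef]
    rw [hH, hGdef]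
    simp only
    rw [hint']
    field_simp
    ring
  have final := hGd.congr_of_eventuallyEq hEq
  refine final.congr_deriv ?_
  rw [hZ0, hA0, hB0]
  have hcomm : (∫ x, p x * (Real.log (q x) * Real.log (p x)) ∂μ)
      = ∫ x, p x * (Real.log (p x) * Real.log (q x)) ∂μ := by
    congr 1; funext x; ring
  rw [hcomm]
  ring
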